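/- Let f : X → X be a homeomorphism of a compact connected metric space with L-shadowing on X and int(CR(f)) ≠ ∅. Then f is a mixing homeomorphism. -/
import Mathlib


open Metric Filter Topology Set

variable {X : Type*}

/-- `(c i)_{i=0}^k` is a `δ`-chain of `f` (up to index `k`). -/
def IsDeltaChain [MetricSpace X] (f : X → X) (δ : ℝ) (k : ℕ) (c : ℕ → X) : Prop :=
  ∀ i < k, dist (f (c i)) (c (i + 1)) ≤ δ

/-- `x → y` : for every `δ > 0` there is a `δ`-chain from `x` to `y`. -/
def ChainReach [MetricSpace X] (f : X → X) (x y : X) : Prop :=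
  ∀ δ > 0, ∃ k ≥ 1, ∃ c : ℕ → X, c 0 = x ∧ c k = y ∧ IsDeltaChain f δ k c

/-- The chain recurrent set. -/
def ChainRec [MetricSpace X] (f : X → X) : Set X := {x | ChainReach f x x}

/-- `C` is a chain component of `f`. -/
def IsChainComponent [MetricSpace X] (f : X → X) (C : Set X) : Prop :=
  ∃ x, ChainReach f x x ∧
    C = {y | ChainReach f y y ∧ ChainReach f x y ∧ ChainReach f y x}

/-- A set is chain stable iff points chain-reachable from it stay in it. -/
def ChainStable [MetricSpace X] (f : X → X) (S : Set X) : Prop :=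
  ∀ x ∈ S, ∀ y, ChainReach f x y → y ∈ S

/-- `S` is "initially stable": if `y → x` with `x ∈ S` then `y ∈ S`. -/
def InitialStable [MetricSpace X] (f : X → X) (S : Set X) : Prop :=
  ∀ x ∈ S, ∀ y, ChainReach f y x → y ∈ S

/-- `f` restricted to `Λ` is chain transitive. -/
def ChainTransitiveOn [MetricSpace X] (f : X → X) (Λ : Set X) : Prop :=
  ∀ p ∈ Λ, ∀ q ∈ Λ, ∀ δ > 0, ∃ k ≥ 1, ∃ c : ℕ → X,
    c 0 = p ∧ c k = q ∧ (∀ i ≤ k, c i ∈ Λ) ∧ IsDeltaChain f δ k c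

/-- `f` has shadowing on `S`. -/
def ShadowsOn [MetricSpace X] (f : X → X) (S : Set X) : Prop :=
  ∀ ε > 0, ∃ δ > 0, ∀ (k : ℕ) (c : ℕ → X), (∀ i ≤ k, c i ∈ S) →
    IsDeltaChain f δ k c → ∃ x, ∀ i ≤ k, dist (c i) (f^[i] x) ≤ ε

/-- Iterate of a homeomorphism indexed by `ℤ`. -/
def hIter [TopologicalSpace X] (f : X ≃ₜ X) (i : ℤ) : X → X :=
  if 0 ≤ i then (⇑f)^[i.toNat] else (⇑f.symm)^[(-i).toNat]

/-- A `δ`-limit-pseudo orbit of the homeomorphism `f`. -/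
def IsLimitPseudoOrbit [MetricSpace X] (f : X ≃ₜ X) (δ : ℝ) (ξ : ℤ → X) : Prop :=
  (∀ i : ℤ, dist (f (ξ i)) (ξ (i + 1)) ≤ δ) ∧
  Tendsto (fun i : ℤ => dist (f (ξ i)) (ξ (i + 1))) atBot (nhds 0) ∧
  Tendsto (fun i : ℤ => dist (f (ξ i)) (ξ (i + 1))) atTop (nhds 0)

/-- `f` has L-shadowing on `S`. -/
def LShadowsOn [MetricSpace X] (f : X ≃ₜ X) (S : Set X) : Prop :=
  ∀ ε > 0, ∃ δ > 0, ∀ ξ : ℤ → X, (∀ i : ℤ, ξ i ∈ S) →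
    IsLimitPseudoOrbit f δ ξ →
    ∃ x : X, (∀ i : ℤ, dist (ξ i) (hIter f i x) ≤ ε) ∧
      Tendsto (fun i : ℤ => dist (ξ i) (hIter f i x)) atBot (nhds 0) ∧
      Tendsto (fun i : ℤ => dist (ξ i) (hIter f i x)) atTop (nhds 0)

/-- `f` is expansive on `S`. -/
def ExpansiveOn [MetricSpace X] (f : X ≃ₜ X) (S : Set X) : Prop :=
  ∃ e > 0, ∀ x y : X, (∀ i : ℤ, hIter f i x ∈ S) → (∀ i : ℤ, hIter f i y ∈ S) →
    (∀ i : ℤ, dist (hIter f i x) (hIter f i y) ≤ e) → x = y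

/-- Closed `b`-neighborhood of `S`. -/
def Nbhd [MetricSpace X] (b : ℝ) (S : Set X) : Set X := {x | Metric.infDist x S ≤ b}

/-- Attractor for a continuous map `f`. -/
def IsAttractor [TopologicalSpace X] (f : X → X) (Λ : Set X) : Prop :=
  IsClosed Λ ∧ f '' Λ = Λ ∧
    ∃ U : Set X, IsOpen U ∧ f '' closure U ⊆ U ∧ Λ = ⋂ i : ℕ, f^[i] '' U

/-- `f` is (topologically) mixing. -/
def IsMixing [TopologicalSpace X] (f : X → X) : Prop :=
  ∀ U V : Set X, IsOpen U → IsOpen V → U.Nonempty → V.Nonempty →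
    ∃ j : ℕ, ∀ i ≥ j, (f^[i] '' U ∩ V).Nonempty

/-- The ω-limit set of `x` under `f`. -/
def OmegaSet [TopologicalSpace X] (f : X → X) (x : X) : Set X :=
  {y | ∃ φ : ℕ → ℕ, StrictMono φ ∧ Tendsto (fun j => f^[φ j] x) atTop (nhds y)}

/-- `M` is a minimal set for `f`. -/
def IsMinimalSet [TopologicalSpace X] (f : X → X) (M : Set X) : Prop :=
  M.Nonempty ∧ IsClosed M ∧ f '' M ⊆ M ∧ ∀ x ∈ M, OmegaSet f x = M

set_option linter.unusedSectionVars false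
section Aux
variable [MetricSpace X]

lemma ucont [CompactSpace X] {g : X → X} (hg : Continuous g) :
    ∀ δ > 0, ∃ γ > 0, ∀ a b : X, dist a b ≤ γ → dist (g a) (g b) ≤ δ := by
  intro δ hδ
  have hu := CompactSpace.uniformContinuous_of_continuous hg
  rw [Metric.uniformContinuous_iff] at hu
  obtain ⟨γ, hγ, h⟩ := hu δ hδ
  refine ⟨γ/2, by linarith, fun a b hab => ?_⟩
  exact le_of_lt (h (lt_of_le_of_lt hab (by linarith)))

lemma iter_cancel (f : X ≃ₜ X) (M N : ℕ) (z : X) :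
    (⇑f)^[M + N] ((⇑f.symm)^[N] z) = (⇑f)^[M] z := by
  have h1 : Function.LeftInverse (⇑f) (⇑f.symm) := f.apply_symm_apply
  rw [Function.iterate_add_apply]
  congr 1
  exact (h1.iterate N) z

/-- concatenation of chains -/
def catc (k : ℕ) (c e : ℕ → X) : ℕ → X := fun j => if j ≤ k then c j else e (j - k)

lemma catc_chain {f : X → X} {δ : ℝ} {k l : ℕ} {c e : ℕ → X}
    (hc : IsDeltaChain f δ k c) (he : IsDeltaChain f δ l e) (hke : c k = e 0) :
    IsDeltaChain f δ (k + l) (catc k c e) := by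
  intro i hi
  rcases lt_or_ge i k with h | h
  · have h1 : i ≤ k := le_of_lt h
    have h2 : i + 1 ≤ k := h
    simp only [catc, if_pos h1, if_pos h2]
    exact hc i h
  · have h2 : ¬ (i + 1 ≤ k) := by omega
    have hv : catc k c e i = e (i - k) := by
      rcases eq_or_lt_of_le h with h' | h'
      · simp [catc, ← h', hke]
      · simp [catc, not_le.mpr h']
    have hv2 : catc k c e (i + 1) = e (i - k + 1) := by
      simp only [catc, if_neg h2]
      congr 1
      omega
    rw [hv, hv2]
    exact he (i - k) (by omega)

lemma catc_zero (k : ℕ) (c e : ℕ → X) : catc k c e 0 = c 0 := by simp [catc]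

lemma catc_last {k l : ℕ} (hl : 1 ≤ l) (c e : ℕ → X) : catc k c e (k + l) = e l := by
  have : ¬ (k + l ≤ k) := by omega
  simp only [catc, if_neg this]
  congr 1
  omega

lemma ChainReach.trans' {f : X → X} {x y z : X} (h1 : ChainReach f x y)
    (h2 : ChainReach f y z) : ChainReach f x z := by
  intro δ hδ
  obtain ⟨k, hk, c, hc0, hck, hc⟩ := h1 δ hδ
  obtain ⟨l, hl, e, he0, hel, he⟩ := h2 δ hδ
  refine ⟨k + l, by omega, catc k c e, by rw [catc_zero, hc0], by rw [catc_last hl, hel], ?_⟩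
  exact catc_chain hc he (by rw [hck, he0])

lemma bridge [CompactSpace X] (f : X ≃ₜ X) {x y z : X}
    (hb : ∀ γ > 0, ∃ N : ℕ, dist ((⇑f.symm)^[N] z) x ≤ γ)
    (hf : ∀ γ > 0, ∃ M : ℕ, 1 ≤ M ∧ dist ((⇑f)^[M] z) y ≤ γ) :
    ChainReach (⇑f) x y := by
  intro δ hδ
  obtain ⟨γ, hγ, hg⟩ := ucont f.continuous (δ/2) (by linarith)
  obtain ⟨N, hN⟩ := hb γ hγ
  obtain ⟨M, hM1, hM⟩ := hf (δ/2) (by linarith)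
  set w := (⇑f.symm)^[N] z with hw
  set k := M + N with hk
  refine ⟨k, by omega, fun j => if j = 0 then x else if j = k then y else (⇑f)^[j] w,
    by simp, by simp [hk]; omega, ?_⟩
  intro i hi
  have hfk : (⇑f)^[k] w = (⇑f)^[M] z := iter_cancel f M N z
  rcases Nat.eq_zero_or_pos i with rfl | hip
  · simp only [if_pos rfl]
    have hfw : dist (f x) (f w) ≤ δ/2 := hg _ _ (by rw [dist_comm]; exact hN)
    rcases eq_or_ne 1 k with h1 | h1
    · have : (if 1 = 0 then x else if 1 = k then y else (⇑f)^[1] w) = y := by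
        rw [if_neg (by omega : (1:ℕ) ≠ 0), if_pos h1]
      rw [this]
      have : f w = (⇑f)^[k] w := by rw [← h1]; simp
      calc dist (f x) y ≤ dist (f x) (f w) + dist (f w) y := dist_triangle _ _ _
        _ ≤ δ/2 + δ/2 := by
            refine add_le_add hfw ?_
            rw [this, hfk]; exact hM
        _ = δ := by ring
    · have : (if 1 = 0 then x else if 1 = k then y else (⇑f)^[1] w) = (⇑f)^[1] w := by
        simp [h1]
      rw [this]
      simpa using hfw.trans (by linarith)
  · have hi0 : i ≠ 0 := by omega
    rcases eq_or_ne (i+1) k with he | he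
    · simp only [if_neg hi0, if_neg (by omega : i ≠ k), if_pos he]
      have : f ((⇑f)^[i] w) = (⇑f)^[k] w := by
        rw [← he, Function.iterate_succ_apply']
      rw [this, hfk]
      exact hM.trans (by linarith)
    · simp only [if_neg hi0, if_neg (by omega : i ≠ k), if_neg (by omega : i + 1 ≠ 0),
        if_neg he]
      rw [Function.iterate_succ_apply']
      simp [le_of_lt hδ]

end Aux
section Aux2
variable [MetricSpace X] [CompactSpace X] (f : X ≃ₜ X)

lemma reach_of_approx {x y : X}
    (h : ∀ δ > 0, ∃ k, 1 ≤ k ∧ ∃ c : ℕ → X, dist x (c 0) ≤ δ ∧ dist (c k) y ≤ δ ∧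
      IsDeltaChain (⇑f) δ k c) :
    ChainReach (⇑f) x y := by
  intro δ hδ
  obtain ⟨γ, hγ, hg⟩ := ucont f.continuous (δ/3) (by linarith)
  set γ' := min γ (δ/3) with hγ'
  have hγ'p : 0 < γ' := lt_min hγ (by linarith)
  obtain ⟨k, hk1, c, hx0, hck, hc⟩ := h γ' hγ'p
  have hγ'γ : γ' ≤ γ := min_le_left _ _
  have hγ'3 : γ' ≤ δ/3 := min_le_right _ _
  have hk0 : k ≠ 0 := by omega
  refine ⟨k, hk1, fun j => if j = 0 then x else if j = k then y else c j, by simp, ?_, ?_⟩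
  · show (if k = 0 then x else if k = k then y else c k) = y
    rw [if_neg hk0, if_pos rfl]
  · intro i hi
    have h1 : dist (f x) (f (c 0)) ≤ δ/3 := hg _ _ (hx0.trans hγ'γ)
    have hcky : dist (c k) y ≤ δ/3 := hck.trans hγ'3
    rcases Nat.eq_zero_or_pos i with rfl | hip
    · show dist (f (if (0:ℕ) = 0 then x else if 0 = k then y else c 0))
        (if (1:ℕ) = 0 then x else if 1 = k then y else c 1) ≤ δ
      rw [if_pos rfl, if_neg (by omega : (1:ℕ) ≠ 0)]
      rcases eq_or_ne 1 k with he | he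
      · rw [if_pos he]
        have hcy : dist (c 1) y ≤ δ/3 := by rw [← he] at hcky; exact hcky
        calc dist (f x) y ≤ dist (f x) (f (c 0)) + dist (f (c 0)) (c 1) + dist (c 1) y :=
              dist_triangle4 _ _ _ _
          _ ≤ δ/3 + δ/3 + δ/3 := add_le_add (add_le_add h1 ((hc 0 hi).trans hγ'3)) hcy
          _ = δ := by ring
      · rw [if_neg he]
        calc dist (f x) (c 1) ≤ dist (f x) (f (c 0)) + dist (f (c 0)) (c 1) := dist_triangle _ _ _
          _ ≤ δ/3 + δ/3 := add_le_add h1 ((hc 0 hi).trans hγ'3)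
          _ ≤ δ := by linarith
    · show dist (f (if i = 0 then x else if i = k then y else c i))
        (if i + 1 = 0 then x else if i + 1 = k then y else c (i+1)) ≤ δ
      rw [if_neg (by omega : i ≠ 0), if_neg (by omega : i ≠ k), if_neg (by omega : i+1 ≠ 0)]
      rcases eq_or_ne (i+1) k with he | he
      · rw [if_pos he]
        have hcy : dist (c (i+1)) y ≤ δ/3 := by rw [← he] at hcky; exact hcky
        calc dist (f (c i)) y ≤ dist (f (c i)) (c (i+1)) + dist (c (i+1)) y := dist_triangle _ _ _
          _ ≤ δ/3 + δ/3 := add_le_add ((hc i hi).trans hγ'3) hcy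
          _ ≤ δ := by linarith
      · rw [if_neg he]
        exact (hc i hi).trans (hγ'3.trans (by linarith))

lemma reach_limit_both {x y : X}
    (h : ∀ δ > 0, ∃ x' y', dist x x' ≤ δ ∧ dist y y' ≤ δ ∧ ChainReach (⇑f) x' y') :
    ChainReach (⇑f) x y := by
  refine reach_of_approx f fun δ hδ => ?_
  obtain ⟨x', y', hx, hy, hr⟩ := h δ hδ
  obtain ⟨k, hk, c, h0, hk', hc⟩ := hr δ hδ
  exact ⟨k, hk, c, by rwa [h0], by rw [hk', dist_comm]; exact hy, hc⟩

lemma reach_fx (x : X) : ChainReach (⇑f) x (f x) := by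
  intro δ hδ
  refine ⟨1, le_refl _, fun j => if j = 0 then x else f x, by simp, by simp, ?_⟩
  intro i hi
  interval_cases i
  simpa using le_of_lt hδ

lemma reach_symm_fx (x : X) : ChainReach (⇑f) (f.symm x) x := by
  intro δ hδ
  refine ⟨1, le_refl _, fun j => if j = 0 then f.symm x else x, by simp, by simp, ?_⟩
  intro i hi
  interval_cases i
  simpa using le_of_lt hδ

lemma lshift {v : X} (hv : v ∈ ChainRec (⇑f)) : ChainReach (⇑f) (f v) v := by
  refine reach_of_approx f fun δ hδ => ?_
  obtain ⟨n, hn, c, hc0, hcn, hc⟩ := hv δ hδ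
  rcases eq_or_lt_of_le hn with h1 | h2
  · have hfv : dist (f v) v ≤ δ := by
      have := hc 0 (by omega)
      rw [hc0] at this
      rw [← h1] at hcn
      rw [hcn] at this
      exact this
    refine ⟨1, le_refl _, fun _ => v, hfv, by simpa using le_of_lt hδ, ?_⟩
    intro i hi
    interval_cases i
    exact hfv
  · refine ⟨n - 1, by omega, fun j => c (j + 1), ?_, ?_, ?_⟩
    · have := hc 0 (by omega)
      rw [hc0] at this
      exact this
    · show dist (c (n - 1 + 1)) v ≤ δ
      rw [(by omega : n - 1 + 1 = n), hcn, dist_self]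
      exact le_of_lt hδ
    · intro i hi
      exact hc (i + 1) (by omega)

lemma rshift_inv {v : X} (hv : v ∈ ChainRec (⇑f)) : ChainReach (⇑f) v (f.symm v) := by
  refine reach_of_approx f fun δ hδ => ?_
  obtain ⟨γ, hγ, hg⟩ := ucont f.symm.continuous δ hδ
  set η := min γ δ with hη
  have hηp : 0 < η := lt_min hγ hδ
  obtain ⟨n, hn, c, hc0, hcn, hc⟩ := hv η hηp
  have key : ∀ i < n, dist (f (c i)) (c (i+1)) ≤ δ := fun i hi => (hc i hi).trans (min_le_right _ _)
  rcases eq_or_lt_of_le hn with h1 | h2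
  · have h0 : dist (f v) v ≤ η := by
      have := hc 0 (by omega)
      rw [hc0] at this
      rw [← h1] at hcn
      rw [hcn] at this
      exact this
    have hvs : dist v (f.symm v) ≤ δ := by
      have : dist v (f.symm v) = dist (f.symm (f v)) (f.symm v) := by rw [f.symm_apply_apply]
      rw [this]
      exact hg _ _ (h0.trans (min_le_left _ _))
    refine ⟨1, le_refl _, fun _ => v, by rw [dist_self]; exact le_of_lt hδ, hvs, ?_⟩
    intro i hi
    interval_cases i
    exact h0.trans (min_le_right _ _)
  · refine ⟨n - 1, by omega, c, by rw [hc0, dist_self]; exact le_of_lt hδ, ?_,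
      fun i hi => key i (by omega)⟩
    have hlast := hc (n-1) (by omega)
    rw [(by omega : n - 1 + 1 = n), hcn] at hlast
    have : dist (c (n-1)) (f.symm v) = dist (f.symm (f (c (n-1)))) (f.symm v) := by
      rw [f.symm_apply_apply]
    rw [this]
    exact hg _ _ (hlast.trans (min_le_left _ _))

lemma img_reach {x y : X} (h : ChainReach (⇑f) x y) : ChainReach (⇑f) (f x) (f y) := by
  intro δ hδ
  obtain ⟨γ, hγ, hg⟩ := ucont f.continuous δ hδ
  obtain ⟨k, hk, c, h0, hk', hc⟩ := h γ hγ
  exact ⟨k, hk, fun j => f (c j), by show f (c 0) = f x; rw [h0],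
    by show f (c k) = f y; rw [hk'], fun i hi => hg _ _ (hc i hi)⟩

lemma img_reach_symm {x y : X} (h : ChainReach (⇑f) x y) :
    ChainReach (⇑f) (f.symm x) (f.symm y) := by
  intro δ hδ
  obtain ⟨γ, hγ, hg⟩ := ucont f.symm.continuous δ hδ
  obtain ⟨k, hk, c, h0, hk', hc⟩ := h γ hγ
  refine ⟨k, hk, fun j => f.symm (c j), by show f.symm (c 0) = f.symm x; rw [h0],
    by show f.symm (c k) = f.symm y; rw [hk'], fun i hi => ?_⟩
  show dist (f (f.symm (c i))) (f.symm (c (i+1))) ≤ δ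
  rw [f.apply_symm_apply]
  have : dist (c i) (f.symm (c (i+1))) = dist (f.symm (f (c i))) (f.symm (c (i+1))) := by
    rw [f.symm_apply_apply]
  rw [this]
  exact hg _ _ (hc i hi)

end Aux2
section Gadget
variable [MetricSpace X] [CompactSpace X] (f : X ≃ₜ X)

lemma gadget {v : X} (hv : v ∈ ChainRec (⇑f)) {δ : ℝ} (hδ : 0 < δ) :
    ∃ (F B : ℕ → X) (T : ℕ → ℕ), StrictMono T ∧ T 0 = 0 ∧
      (∀ m, F (T m) = v) ∧ (∀ m, B (T m) = v) ∧
      (∀ t, dist (f (F t)) (F (t+1)) ≤ δ) ∧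
      (∀ t, dist (f (B (t+1))) (B t) ≤ δ) ∧
      Tendsto (fun t => dist (f (F t)) (F (t+1))) atTop (nhds 0) ∧
      Tendsto (fun t => dist (f (B (t+1))) (B t)) atTop (nhds 0) := by
  have H : ∀ m : ℕ, ∃ nn, 1 ≤ nn ∧ ∃ c : ℕ → X, c 0 = v ∧ c nn = v ∧
      IsDeltaChain (⇑f) (min δ (1/(m+1))) nn c := by
    intro m
    have hpos : (0:ℝ) < min δ (1/(m+1)) := by
      refine lt_min hδ ?_
      positivity
    obtain ⟨k, hk, c, h0, hk', hc⟩ := hv _ hpos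
    exact ⟨k, hk, c, h0, hk', hc⟩
  choose n hn c hc0 hcn hc using H
  set S : ℕ → ℕ := fun m => ∑ i ∈ Finset.range m, n i with hS
  have hSsucc : ∀ m, S (m+1) = S m + n m := fun m => Finset.sum_range_succ _ _
  have hSmono : StrictMono S := strictMono_nat_of_lt_succ (fun m => by
    rw [hSsucc]; have := hn m; omega)
  have hS0 : S 0 = 0 := rfl
  have hSle : ∀ m, m ≤ S m := fun m => hSmono.le_apply
  have hex : ∀ t : ℕ, ∃ m, t < S (m+1) := fun t => ⟨t, lt_of_lt_of_le (by omega) (hSle (t+1))⟩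
  set M : ℕ → ℕ := fun t => Nat.find (hex t) with hM
  have hMlt : ∀ t, t < S (M t + 1) := fun t => Nat.find_spec (hex t)
  have hMle : ∀ t, S (M t) ≤ t := by
    intro t
    rcases Nat.eq_zero_or_pos (M t) with h0 | h0
    · rw [h0, hS0]; omega
    · have := Nat.find_min (hex t) (show M t - 1 < M t by omega)
      rw [(by omega : M t - 1 + 1 = M t)] at this
      omega
  have hMuniq : ∀ t m, S m ≤ t → t < S (m+1) → M t = m := by
    intro t m h1 h2
    refine le_antisymm (Nat.find_le h2) ?_
    by_contra hlt
    push_neg at hlt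
    have : S (M t + 1) ≤ S m := hSmono.monotone (by omega)
    have := hMlt t
    omega
  have hMS : ∀ m, M (S m) = m := fun m => hMuniq _ _ (le_refl _) (hSmono (by omega))
  set F : ℕ → X := fun t => c (M t) (t - S (M t)) with hF
  set B : ℕ → X := fun t => c (M t) (S (M t + 1) - t) with hB
  have hnm : ∀ m, S (m+1) - S m = n m := fun m => by rw [hSsucc]; omega
  have hFT : ∀ m, F (S m) = v := by
    intro m
    show c (M (S m)) (S m - S (M (S m))) = v
    rw [hMS m]
    simpa using hc0 m
  have hBT : ∀ m, B (S m) = v := by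
    intro m
    show c (M (S m)) (S (M (S m) + 1) - S m) = v
    rw [hMS m, hnm m]
    exact hcn m
  -- error bounds
  have hFstep : ∀ t, dist (f (F t)) (F (t+1)) ≤ min δ (1/(M t + 1)) := by
    intro t
    have h1 := hMle t
    have h2 := hMlt t
    rcases eq_or_lt_of_le (show t + 1 ≤ S (M t + 1) by omega) with he | he
    · -- t+1 = S (M t + 1)
      have hft1 : F (t+1) = v := by rw [he]; exact hFT _
      have hjt : t - S (M t) = n (M t) - 1 := by
        have := hnm (M t); omega
      show dist (f (c (M t) (t - S (M t)))) (F (t+1)) ≤ _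
      rw [hft1, hjt]
      have hlast := hc (M t) (n (M t) - 1) (by have := hn (M t); omega)
      rw [(by have := hn (M t); omega : n (M t) - 1 + 1 = n (M t)), hcn] at hlast
      exact hlast
    · -- t+1 < S (M t + 1)
      have hMt1 : M (t+1) = M t := hMuniq _ _ (by omega) he
      show dist (f (c (M t) (t - S (M t)))) (c (M (t+1)) (t + 1 - S (M (t+1)))) ≤ _
      rw [hMt1, (by omega : t + 1 - S (M t) = (t - S (M t)) + 1)]
      exact hc (M t) (t - S (M t)) (by have := hnm (M t); omega)
  have hBstep : ∀ t, dist (f (B (t+1))) (B t) ≤ min δ (1/(M t + 1)) := by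
    intro t
    have h1 := hMle t
    have h2 := hMlt t
    rcases eq_or_lt_of_le (show t + 1 ≤ S (M t + 1) by omega) with he | he
    · -- t+1 = S (M t + 1) : B (t+1) = v, B t = c (M t) 1
      have hbt1 : B (t+1) = v := by rw [he]; exact hBT _
      show dist (f (B (t+1))) (c (M t) (S (M t + 1) - t)) ≤ _
      rw [hbt1, (by omega : S (M t + 1) - t = 1)]
      have h0 := hc (M t) 0 (by have := hn (M t); omega)
      rw [hc0] at h0
      exact h0
    · have hMt1 : M (t+1) = M t := hMuniq _ _ (by omega) he
      show dist (f (c (M (t+1)) (S (M (t+1) + 1) - (t+1)))) (c (M t) (S (M t + 1) - t)) ≤ _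
      rw [hMt1, (by omega : S (M t + 1) - t = (S (M t + 1) - (t+1)) + 1)]
      exact hc (M t) (S (M t + 1) - (t+1)) (by have := hnm (M t); omega)
  have hMtop : Tendsto M atTop atTop := by
    rw [tendsto_atTop_atTop]
    intro K
    refine ⟨S K, fun t ht => ?_⟩
    have : S K < S (M t + 1) := lt_of_le_of_lt ht (hMlt t)
    have := hSmono.lt_iff_lt.mp this
    omega
  have hinv : Tendsto (fun t => (1:ℝ)/(M t + 1)) atTop (nhds 0) :=
    tendsto_one_div_add_atTop_nhds_zero_nat.comp hMtop
  refine ⟨F, B, S, hSmono, hS0, hFT, hBT,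
    fun t => (hFstep t).trans (min_le_left _ _),
    fun t => (hBstep t).trans (min_le_left _ _), ?_, ?_⟩
  · exact squeeze_zero (fun t => dist_nonneg) (fun t => (hFstep t).trans (min_le_right _ _)) hinv
  · exact squeeze_zero (fun t => dist_nonneg) (fun t => (hBstep t).trans (min_le_right _ _)) hinv

end Gadget
section ZHelp
variable [MetricSpace X]

lemma hIter_coe [TopologicalSpace X] : True := trivial

end ZHelp

section ZHelp2
variable [MetricSpace X] (f : X ≃ₜ X)

lemma hIter_natCast (m : ℕ) (z : X) : hIter f (m : ℤ) z = (⇑f)^[m] z := by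
  unfold hIter
  rw [if_pos (by positivity : (0:ℤ) ≤ (m:ℤ))]
  simp

lemma hIter_negNatCast (m : ℕ) (z : X) : hIter f (-(m : ℤ)) z = (⇑f.symm)^[m] z := by
  unfold hIter
  rcases Nat.eq_zero_or_pos m with rfl | hm
  · simp
  · rw [if_neg (by omega : ¬ (0:ℤ) ≤ -(m:ℤ))]
    simp

lemma tendsto_along_atTop {g : ℤ → ℝ} {h : ℕ → ℝ} {φ : ℤ → ℕ}
    (H : Tendsto h atTop (nhds 0)) (hφ : Tendsto φ atTop atTop)
    (he : ∀ᶠ i : ℤ in atTop, g i = h (φ i)) : Tendsto g atTop (nhds 0) :=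
  (H.comp hφ).congr' (by filter_upwards [he] with i hi using hi.symm)

lemma tendsto_along_atBot {g : ℤ → ℝ} {h : ℕ → ℝ} {φ : ℤ → ℕ}
    (H : Tendsto h atTop (nhds 0)) (hφ : Tendsto φ atBot atTop)
    (he : ∀ᶠ i : ℤ in atBot, g i = h (φ i)) : Tendsto g atBot (nhds 0) :=
  (H.comp hφ).congr' (by filter_upwards [he] with i hi using hi.symm)

lemma tendsto_toNat_atTop : Tendsto (fun i : ℤ => i.toNat) atTop atTop := by
  rw [tendsto_atTop_atTop]
  intro K
  exact ⟨(K:ℤ), fun i hi => by omega⟩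


lemma fwd_approach {ξ : ℤ → X} {z y : X} {T : ℕ → ℕ} (hT : StrictMono T)
    (hval : ∀ m, 1 ≤ m → ξ ((T m : ℕ) : ℤ) = y)
    (htt : Tendsto (fun i : ℤ => dist (ξ i) (hIter f i z)) atTop (nhds 0)) :
    ∀ γ > 0, ∃ M, 1 ≤ M ∧ dist ((⇑f)^[M] z) y ≤ γ := by
  intro γ hγ
  have hTm : Tendsto (fun m : ℕ => ((T m : ℕ) : ℤ)) atTop atTop := by
    rw [tendsto_atTop_atTop]
    intro K
    refine ⟨K.toNat, fun m hm => ?_⟩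
    have : m ≤ T m := hT.le_apply
    omega
  have hcomp : Tendsto (fun m : ℕ => dist (ξ ((T m : ℕ) : ℤ)) (hIter f ((T m : ℕ) : ℤ) z))
      atTop (nhds 0) := htt.comp hTm
  have hev : ∀ᶠ m : ℕ in atTop, dist (ξ ((T m : ℕ) : ℤ)) (hIter f ((T m : ℕ) : ℤ) z) < γ := by
    have := Metric.tendsto_nhds.mp hcomp γ hγ
    simpa [Real.dist_eq, abs_of_nonneg dist_nonneg] using this
  obtain ⟨m, hm⟩ := (hev.and (eventually_ge_atTop 1)).exists
  have hm2 : 1 ≤ m := hm.2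
  refine ⟨T m, ?_, ?_⟩
  · have h0 : T 0 < T m := hT (by omega)
    omega
  · have h1 := hm.1
    rw [hval m hm2, hIter_natCast] at h1
    rw [dist_comm]
    exact le_of_lt h1

lemma bwd_approach {ξ : ℤ → X} {z x : X} {T : ℕ → ℕ} (hT : StrictMono T)
    (hval : ∀ m, ξ (-((T m : ℕ) : ℤ)) = x)
    (htb : Tendsto (fun i : ℤ => dist (ξ i) (hIter f i z)) atBot (nhds 0)) :
    ∀ γ > 0, ∃ N : ℕ, dist ((⇑f.symm)^[N] z) x ≤ γ := by
  intro γ hγ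
  have hTm : Tendsto (fun m : ℕ => -((T m : ℕ) : ℤ)) atTop atBot := by
    rw [tendsto_atTop_atBot]
    intro K
    refine ⟨(-K).toNat, fun m hm => ?_⟩
    have : m ≤ T m := hT.le_apply
    omega
  have hcomp : Tendsto (fun m : ℕ => dist (ξ (-((T m : ℕ) : ℤ))) (hIter f (-((T m : ℕ) : ℤ)) z))
      atTop (nhds 0) := htb.comp hTm
  have hev : ∀ᶠ m : ℕ in atTop, dist (ξ (-((T m : ℕ) : ℤ))) (hIter f (-((T m : ℕ) : ℤ)) z) < γ := by
    have := Metric.tendsto_nhds.mp hcomp γ hγ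
    simpa [Real.dist_eq, abs_of_nonneg dist_nonneg] using this
  obtain ⟨m, hm1⟩ := hev.exists
  refine ⟨T m, ?_⟩
  rw [hval m, hIter_negNatCast] at hm1
  rw [dist_comm]
  exact le_of_lt hm1

end ZHelp2

section Star
variable [MetricSpace X] [CompactSpace X] (f : X ≃ₜ X)

lemma star (hL : LShadowsOn f Set.univ) :
    ∃ δ0 > 0, ∀ x y : X, x ∈ ChainRec (⇑f) → y ∈ ChainRec (⇑f) → dist x y ≤ δ0 →
      ChainReach (⇑f) x y := by
  obtain ⟨δL, hδL, hsh⟩ := hL 1 one_pos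
  obtain ⟨γ, hγ, hg⟩ := ucont f.continuous (δL/2) (by linarith)
  refine ⟨γ, hγ, fun x y hx hy hxy => ?_⟩
  obtain ⟨Fx, Bx, Tx, hTx, hTx0, hFTx, hBTx, hFsx, hBsx, hFtx, hBtx⟩ :=
    gadget f hx (show (0:ℝ) < δL/2 by linarith)
  obtain ⟨Fy, By, Ty, hTy, hTy0, hFTy, hBTy, hFsy, hBsy, hFty, hBty⟩ :=
    gadget f hy (show (0:ℝ) < δL/2 by linarith)
  set ξ : ℤ → X := fun i => if i ≤ 0 then Bx (-i).toNat else Fy i.toNat with hξ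
  have hξ0 : ξ 0 = x := by
    show Bx ((0:ℤ)).toNat = x
    have := hBTx 0
    rw [hTx0] at this
    simpa using this
  have hneg : ∀ i : ℤ, i ≤ 0 → ξ i = Bx (-i).toNat := by
    intro i hi
    simp only [hξ, if_pos hi]
  have hpos : ∀ i : ℤ, 1 ≤ i → ξ i = Fy i.toNat := by
    intro i hi
    simp only [hξ, if_neg (by omega : ¬ i ≤ 0)]
  have hFy0 : Fy 0 = y := by
    have := hFTy 0
    rwa [hTy0] at this
  have herr : ∀ i : ℤ, dist (f (ξ i)) (ξ (i+1)) ≤ δL := by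
    intro i
    rcases lt_trichotomy i 0 with hi | rfl | hi
    · rw [hneg i (by omega), hneg (i+1) (by omega)]
      have : (-i).toNat = (-(i+1)).toNat + 1 := by omega
      rw [this]
      exact (hBsx _).trans (by linarith)
    · have h01 : (0:ℤ) + 1 = 1 := rfl
      rw [h01, hξ0, hpos 1 (le_refl _)]
      show dist (f x) (Fy ((1:ℤ)).toNat) ≤ δL
      have h1 : ((1:ℤ)).toNat = 1 := rfl
      rw [h1]
      calc dist (f x) (Fy 1) ≤ dist (f x) (f y) + dist (f y) (Fy 1) := dist_triangle _ _ _
        _ ≤ δL/2 + δL/2 := by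
            refine add_le_add (hg _ _ hxy) ?_
            have := hFsy 0
            rwa [hFy0] at this
        _ = δL := by ring
    · rw [hpos i (by omega), hpos (i+1) (by omega)]
      have : (i+1).toNat = i.toNat + 1 := by omega
      rw [this]
      exact (hFsy _).trans (by linarith)
  have hlpo : IsLimitPseudoOrbit f δL ξ := by
    refine ⟨herr, ?_, ?_⟩
    · refine tendsto_along_atBot hBtx (φ := fun i => (-(i+1)).toNat) ?_ ?_
      · rw [tendsto_atBot_atTop]
        intro K
        exact ⟨-(K:ℤ) - 1, fun i hi => by omega⟩
      · rw [eventually_atBot]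
        refine ⟨-1, fun i hi => ?_⟩
        rw [hneg i (by omega), hneg (i+1) (by omega)]
        have : (-i).toNat = (-(i+1)).toNat + 1 := by omega
        rw [this]
    · refine tendsto_along_atTop hFty (φ := fun i => i.toNat) ?_ ?_
      · exact tendsto_toNat_atTop
      · rw [eventually_atTop]
        refine ⟨1, fun i hi => ?_⟩
        rw [hpos i hi, hpos (i+1) (by omega)]
        have : (i+1).toNat = i.toNat + 1 := by omega
        rw [this]
  obtain ⟨z, hzb, hzbt, hztt⟩ := hsh ξ (fun i => mem_univ _) hlpo
  have hb : ∀ γ' > 0, ∃ N : ℕ, dist ((⇑f.symm)^[N] z) x ≤ γ' := by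
    refine bwd_approach f hTx (fun m => ?_) hzbt
    rw [hneg _ (by omega)]
    have : (-(-((Tx m : ℕ) : ℤ))).toNat = Tx m := by omega
    rw [this]
    exact hBTx m
  have hf : ∀ γ' > 0, ∃ M, 1 ≤ M ∧ dist ((⇑f)^[M] z) y ≤ γ' := by
    refine fwd_approach f hTy (fun m hm => ?_) hztt
    have hTm : 1 ≤ Ty m := by
      have h0 : Ty 0 < Ty m := hTy (by omega)
      omega
    rw [hpos _ (by exact_mod_cast hTm)]
    have : ((Ty m : ℕ) : ℤ).toNat = Ty m := by omega
    rw [this]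
    exact hFTy m
  exact bridge f hb hf

end Star
section CsetSec
variable [MetricSpace X] [CompactSpace X] (f : X ≃ₜ X)

def Cset (p : X) : Set X :=
  {v | ChainReach (⇑f) p v ∧ ChainReach (⇑f) v p ∧ v ∈ ChainRec (⇑f)}

lemma Cset_f {p v : X} (h : v ∈ Cset f p) : f v ∈ Cset f p :=
  ⟨h.1.trans' (reach_fx f v), (lshift f h.2.2).trans' h.2.1,
    (lshift f h.2.2).trans' (reach_fx f v)⟩

lemma Cset_fsymm {p v : X} (h : v ∈ Cset f p) : f.symm v ∈ Cset f p :=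
  ⟨h.1.trans' (rshift_inv f h.2.2), (reach_symm_fx f v).trans' h.2.1,
    (reach_symm_fx f v).trans' (rshift_inv f h.2.2)⟩

lemma Cset_iter {p v : X} (h : v ∈ Cset f p) (n : ℕ) : (⇑f)^[n] v ∈ Cset f p := by
  induction n with
  | zero => simpa using h
  | succ n ih => rw [Function.iterate_succ_apply']; exact Cset_f f ih

lemma Cset_iter_symm {p v : X} (h : v ∈ Cset f p) (n : ℕ) : (⇑f.symm)^[n] v ∈ Cset f p := by
  induction n with
  | zero => simpa using h
  | succ n ih => rw [Function.iterate_succ_apply']; exact Cset_fsymm f ih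

lemma Cset_closed (p : X) : IsClosed (Cset f p) := by
  rw [← closure_subset_iff_isClosed]
  intro v hv
  rw [Metric.mem_closure_iff] at hv
  have key : ∀ δ > 0, ∃ v' ∈ Cset f p, dist v v' ≤ δ := by
    intro δ hδ
    obtain ⟨v', hv', hd⟩ := hv δ hδ
    exact ⟨v', hv', le_of_lt hd⟩
  refine ⟨?_, ?_, ?_⟩
  · refine reach_limit_both f fun δ hδ => ?_
    obtain ⟨v', hv', hd⟩ := key δ hδ
    exact ⟨p, v', by simpa using le_of_lt hδ, hd, hv'.1⟩
  · refine reach_limit_both f fun δ hδ => ?_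
    obtain ⟨v', hv', hd⟩ := key δ hδ
    exact ⟨v', p, hd, by simpa using le_of_lt hδ, hv'.2.1⟩
  · refine reach_limit_both f fun δ hδ => ?_
    obtain ⟨v', hv', hd⟩ := key δ hδ
    exact ⟨v', v', hd, hd, hv'.2.2⟩

end CsetSec
section Asymp
variable [MetricSpace X] [CompactSpace X] (f : X ≃ₜ X)

lemma iter_cancel' (N : ℕ) (z : X) : (⇑f)^[N] ((⇑f.symm)^[N] z) = z := by
  have := iter_cancel f 0 N z
  rwa [(by omega : 0 + N = N)] at this

lemma iter_cancel_symm (N : ℕ) (z : X) : (⇑f.symm)^[N] ((⇑f)^[N] z) = z := by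
  have h1 : Function.LeftInverse (⇑f.symm) (⇑f) := f.symm_apply_apply
  exact (h1.iterate N) z

lemma asymp_fwd (hL : LShadowsOn f Set.univ) {p : X} {ε0 : ℝ} (hε0 : 0 < ε0)
    (hball : ∀ w, dist w p ≤ ε0 → w ∈ Cset f p) :
    ∃ r > 0, ∀ x ∈ Cset f p, ∀ y : X, dist x y ≤ r →
      ∃ z ∈ Cset f p, Tendsto (fun t : ℕ => dist ((⇑f)^[t] y) ((⇑f)^[t] z)) atTop (nhds 0) := by
  obtain ⟨δL, hδL, hsh⟩ := hL ε0 hε0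
  refine ⟨δL/4, by linarith, fun x hx y hxy => ?_⟩
  have hp : p ∈ ChainRec (⇑f) := hx.1.trans' hx.2.1
  obtain ⟨K, hK, e, he0, heK, hec⟩ := hx.1 (δL/4) (by linarith)
  obtain ⟨Fp, Bp, Tp, hTp, hTp0, hFTp, hBTp, hFsp, hBsp, hFtp, hBtp⟩ :=
    gadget f hp (show (0:ℝ) < δL/2 by linarith)
  have hBp0 : Bp 0 = p := by have := hBTp 0; rwa [hTp0] at this
  set ξ : ℤ → X := fun i => if 0 ≤ i then (⇑f)^[i.toNat] y
    else if -(K:ℤ) < i then e ((i + K).toNat) else Bp ((-i - K).toNat) with hξdef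
  have hA : ∀ i : ℤ, 0 ≤ i → ξ i = (⇑f)^[i.toNat] y := fun i hi => by
    simp only [hξdef, if_pos hi]
  have hB : ∀ i : ℤ, -(K:ℤ) < i → i < 0 → ξ i = e ((i + K).toNat) := fun i h1 h2 => by
    simp only [hξdef, if_neg (by omega : ¬ (0:ℤ) ≤ i), if_pos h1]
  have hC : ∀ i : ℤ, i ≤ -(K:ℤ) → ξ i = Bp ((-i - K).toNat) := fun i h1 => by
    simp only [hξdef, if_neg (by omega : ¬ (0:ℤ) ≤ i), if_neg (by omega : ¬ -(K:ℤ) < i)]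
  have hzero : ∀ i : ℤ, 0 ≤ i → dist (f (ξ i)) (ξ (i+1)) = 0 := by
    intro i hi
    rw [hA i hi, hA (i+1) (by omega), (by omega : (i+1).toNat = i.toNat + 1),
      Function.iterate_succ_apply', dist_self]
  have hm1 : ξ (-1) = e (K - 1) := by
    rcases eq_or_lt_of_le hK with h1 | h2
    · rw [hC (-1) (by omega)]
      rw [show ((-(-1:ℤ)) - (K:ℤ)).toNat = 0 by omega]
      rw [hBp0, show K - 1 = 0 by omega, he0]
    · rw [hB (-1) (by omega) (by omega)]
      congr 1
      omega
  have herr : ∀ i : ℤ, dist (f (ξ i)) (ξ (i+1)) ≤ δL := by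
    intro i
    rcases le_or_gt 0 i with hi | hi
    · rw [hzero i hi]; linarith
    rcases eq_or_ne i (-1) with rfl | hne
    · rw [show (-1:ℤ) + 1 = 0 by omega, hm1, hA 0 le_rfl]
      have h0 : ((0:ℤ)).toNat = 0 := rfl
      rw [h0, Function.iterate_zero_apply]
      have hlast := hec (K-1) (by omega)
      rw [show K - 1 + 1 = K by omega] at hlast
      calc dist (f (e (K-1))) y ≤ dist (f (e (K-1))) (e K) + dist (e K) y := dist_triangle _ _ _
        _ ≤ δL/4 + δL/4 := add_le_add hlast (by rw [heK]; exact hxy)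
        _ ≤ δL := by linarith
    · have hi2 : i ≤ -2 := by omega
      rcases lt_trichotomy i (-(K:ℤ)) with h | h | h
      · rw [hC i (by omega), hC (i+1) (by omega)]
        have e2 : (-(i+1) - (K:ℤ)).toNat = (-i - (K:ℤ)).toNat - 1 := by omega
        rw [e2]
        have hb := hBsp ((-i - (K:ℤ)).toNat - 1)
        rw [show (-i - (K:ℤ)).toNat - 1 + 1 = (-i - (K:ℤ)).toNat by omega] at hb
        exact hb.trans (by linarith)
      · have hK2 : 2 ≤ K := by omega
        rw [hC i (le_of_eq h), hB (i+1) (by omega) (by omega)]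
        rw [show (-i - (K:ℤ)).toNat = 0 by omega, show ((i+1) + (K:ℤ)).toNat = 1 by omega,
          hBp0, ← he0]
        exact (hec 0 (by omega)).trans (by linarith)
      · rw [hB i h (by omega), hB (i+1) (by omega) (by omega)]
        rw [show ((i+1) + (K:ℤ)).toNat = (i + (K:ℤ)).toNat + 1 by omega]
        exact (hec ((i + (K:ℤ)).toNat) (by omega)).trans (by linarith)
  have hlpo : IsLimitPseudoOrbit f δL ξ := by
    refine ⟨herr, ?_, ?_⟩
    · refine tendsto_along_atBot hBtp (φ := fun i => (-i - (K:ℤ)).toNat - 1) ?_ ?_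
      · rw [tendsto_atBot_atTop]
        intro b
        exact ⟨-(K:ℤ) - b - 2, fun i hi => by omega⟩
      · rw [eventually_atBot]
        refine ⟨-(K:ℤ) - 1, fun i hi => ?_⟩
        rw [hC i (by omega), hC (i+1) (by omega)]
        have e2 : (-(i+1) - (K:ℤ)).toNat = (-i - (K:ℤ)).toNat - 1 := by omega
        rw [e2]
        show dist (f (Bp ((-i - (K:ℤ)).toNat))) (Bp ((-i - (K:ℤ)).toNat - 1)) =
          dist (f (Bp (((-i - (K:ℤ)).toNat - 1) + 1))) (Bp ((-i - (K:ℤ)).toNat - 1))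
        rw [show ((-i - (K:ℤ)).toNat - 1) + 1 = (-i - (K:ℤ)).toNat by omega]
    · have hev : (fun i : ℤ => dist (f (ξ i)) (ξ (i+1))) =ᶠ[atTop] (fun _ => (0:ℝ)) :=
        eventually_atTop.mpr ⟨0, fun i hi => hzero i hi⟩
      exact Filter.Tendsto.congr' hev.symm tendsto_const_nhds
  obtain ⟨z, hzb, hzbt, hztt⟩ := hsh ξ (fun _ => mem_univ _) hlpo
  have hbw : ∀ γ' > 0, ∃ N : ℕ, dist ((⇑f.symm)^[N] z) p ≤ γ' := by
    refine bwd_approach f (T := fun m => K + Tp m)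
      (fun a b hab => by simpa using Nat.add_lt_add_left (hTp hab) K) (fun m => ?_) hzbt
    rw [hC _ (by push_cast; omega)]
    rw [show (-(-((K + Tp m : ℕ) : ℤ)) - (K:ℤ)).toNat = Tp m by push_cast; omega]
    exact hBTp m
  obtain ⟨N, hN⟩ := hbw ε0 hε0
  have hz : z ∈ Cset f p := by
    have := Cset_iter f (hball _ hN) N
    rwa [iter_cancel'] at this
  refine ⟨z, hz, ?_⟩
  have hcast : Tendsto (fun t : ℕ => (t : ℤ)) atTop atTop := by
    rw [tendsto_atTop_atTop]
    intro b
    exact ⟨b.toNat, fun t ht => by omega⟩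
  have hcomp := hztt.comp hcast
  refine Filter.Tendsto.congr' ?_ hcomp
  rw [EventuallyEq, eventually_atTop]
  refine ⟨0, fun t _ => ?_⟩
  show dist (ξ (t:ℤ)) (hIter f (t:ℤ) z) = _
  rw [hA _ (by positivity), hIter_natCast]
  simp

end Asymp
section Asymp2
variable [MetricSpace X] [CompactSpace X] (f : X ≃ₜ X)

lemma asymp_bwd (hL : LShadowsOn f Set.univ) {p : X} {ε0 : ℝ} (hε0 : 0 < ε0)
    (hball : ∀ w, dist w p ≤ ε0 → w ∈ Cset f p) :
    ∃ r > 0, ∀ x ∈ Cset f p, ∀ y : X, dist x y ≤ r →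
      ∃ z ∈ Cset f p, Tendsto (fun t : ℕ => dist ((⇑f.symm)^[t] y) ((⇑f.symm)^[t] z)) atTop (nhds 0) := by
  obtain ⟨δL, hδL, hsh⟩ := hL ε0 hε0
  obtain ⟨γf, hγf, hgf⟩ := ucont f.continuous (δL/2) (by linarith)
  refine ⟨γf, hγf, fun x hx y hxy => ?_⟩
  have hp : p ∈ ChainRec (⇑f) := hx.1.trans' hx.2.1
  obtain ⟨K, hK, e, he0, heK, hec⟩ := hx.2.1 (δL/4) (by linarith)
  obtain ⟨Fp, Bp, Tp, hTp, hTp0, hFTp, hBTp, hFsp, hBsp, hFtp, hBtp⟩ :=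
    gadget f hp (show (0:ℝ) < δL/2 by linarith)
  have hFp0 : Fp 0 = p := by have := hFTp 0; rwa [hTp0] at this
  set ξ : ℤ → X := fun i => if i ≤ 0 then (⇑f.symm)^[(-i).toNat] y
    else if i < (K:ℤ) then e i.toNat else Fp ((i - K).toNat) with hξdef
  have hA : ∀ i : ℤ, i ≤ 0 → ξ i = (⇑f.symm)^[(-i).toNat] y := fun i hi => by
    simp only [hξdef, if_pos hi]
  have hB : ∀ i : ℤ, 0 < i → i < (K:ℤ) → ξ i = e i.toNat := fun i h1 h2 => by
    simp only [hξdef, if_neg (by omega : ¬ i ≤ 0), if_pos h2]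
  have hC : ∀ i : ℤ, (K:ℤ) ≤ i → ξ i = Fp ((i - K).toNat) := fun i h1 => by
    simp only [hξdef, if_neg (by omega : ¬ i ≤ 0), if_neg (by omega : ¬ i < (K:ℤ))]
  have hξ0 : ξ 0 = y := by
    rw [hA 0 le_rfl]
    simp
  have hzero : ∀ i : ℤ, i ≤ -1 → dist (f (ξ i)) (ξ (i+1)) = 0 := by
    intro i hi
    rw [hA i (by omega), hA (i+1) (by omega)]
    have ht : (-i).toNat = (-(i+1)).toNat + 1 := by omega
    rw [ht, Function.iterate_succ_apply', f.apply_symm_apply, dist_self]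
  have hξ1 : ξ 1 = e 1 := by
    rcases eq_or_lt_of_le hK with h1 | h2
    · rw [hC 1 (by omega)]
      rw [show ((1:ℤ) - (K:ℤ)).toNat = 0 by omega, hFp0, ← heK, show K = 1 by omega]
    · rw [hB 1 (by omega) (by omega)]
      rfl
  have herr : ∀ i : ℤ, dist (f (ξ i)) (ξ (i+1)) ≤ δL := by
    intro i
    rcases lt_trichotomy i 0 with hi | rfl | hi
    · rw [hzero i (by omega)]; linarith
    · rw [show (0:ℤ) + 1 = 1 by omega, hξ0, hξ1]
      have h01 := hec 0 (by omega)
      rw [he0] at h01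
      calc dist (f y) (e 1) ≤ dist (f y) (f x) + dist (f x) (e 1) := dist_triangle _ _ _
        _ ≤ δL/2 + δL/4 := add_le_add (hgf _ _ (by rw [dist_comm]; exact hxy)) h01
        _ ≤ δL := by linarith
    · rcases lt_trichotomy i (K:ℤ) with h | h | h
      · -- 1 ≤ i < K
        rw [hB i hi h]
        have hval : ξ (i + 1) = e (i.toNat + 1) := by
          rcases eq_or_lt_of_le (show i + 1 ≤ (K:ℤ) by omega) with he' | he'
          · rw [hC (i+1) (by omega), show ((i+1) - (K:ℤ)).toNat = 0 by omega, hFp0, ← heK]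
            congr 1
            omega
          · rw [hB (i+1) (by omega) he']
            congr 1
            omega
        rw [hval]
        exact (hec i.toNat (by omega)).trans (by linarith)
      · -- i = K
        rw [hC i (le_of_eq h.symm), hC (i+1) (by omega)]
        rw [show (i - (K:ℤ)).toNat = 0 by omega, show ((i+1) - (K:ℤ)).toNat = 1 by omega]
        exact (hFsp 0).trans (by linarith)
      · rw [hC i (by omega), hC (i+1) (by omega)]
        rw [show ((i+1) - (K:ℤ)).toNat = (i - (K:ℤ)).toNat + 1 by omega]
        exact (hFsp _).trans (by linarith)
  have hlpo : IsLimitPseudoOrbit f δL ξ := by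
    refine ⟨herr, ?_, ?_⟩
    · have hev : (fun i : ℤ => dist (f (ξ i)) (ξ (i+1))) =ᶠ[atBot] (fun _ => (0:ℝ)) :=
        eventually_atBot.mpr ⟨-1, fun i hi => hzero i hi⟩
      exact Filter.Tendsto.congr' hev.symm tendsto_const_nhds
    · refine tendsto_along_atTop hFtp (φ := fun i => (i - (K:ℤ)).toNat) ?_ ?_
      · rw [tendsto_atTop_atTop]
        intro b
        exact ⟨(b:ℤ) + K, fun i hi => by omega⟩
      · rw [eventually_atTop]
        refine ⟨(K:ℤ), fun i hi => ?_⟩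
        rw [hC i hi, hC (i+1) (by omega)]
        rw [show ((i+1) - (K:ℤ)).toNat = (i - (K:ℤ)).toNat + 1 by omega]
  obtain ⟨z, hzb, hzbt, hztt⟩ := hsh ξ (fun _ => mem_univ _) hlpo
  have hfw : ∀ γ' > 0, ∃ M : ℕ, 1 ≤ M ∧ dist ((⇑f)^[M] z) p ≤ γ' := by
    refine fwd_approach f (T := fun m => K + Tp m)
      (fun a b hab => by simpa using Nat.add_lt_add_left (hTp hab) K) (fun m hm => ?_) hztt
    rw [hC _ (by push_cast; omega)]
    rw [show (((K + Tp m : ℕ) : ℤ) - (K:ℤ)).toNat = Tp m by push_cast; omega]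
    exact hFTp m
  obtain ⟨M, hM1, hM⟩ := hfw ε0 hε0
  have hz : z ∈ Cset f p := by
    have := Cset_iter_symm f (hball _ hM) M
    rwa [iter_cancel_symm] at this
  refine ⟨z, hz, ?_⟩
  have hcast : Tendsto (fun t : ℕ => -(t : ℤ)) atTop atBot := by
    rw [tendsto_atTop_atBot]
    intro b
    exact ⟨(-b).toNat, fun t ht => by omega⟩
  have hcomp := hzbt.comp hcast
  refine Filter.Tendsto.congr' ?_ hcomp
  rw [EventuallyEq, eventually_atTop]
  refine ⟨0, fun t _ => ?_⟩
  show dist (ξ (-(t:ℤ))) (hIter f (-(t:ℤ)) z) = _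
  rw [hA _ (by omega), hIter_negNatCast]
  congr 2
  omega

end Asymp2
section OpenLem
variable [MetricSpace X] [CompactSpace X] (f : X ≃ₜ X)

lemma Cset_uniform_open (hL : LShadowsOn f Set.univ) {p : X} {ε0 : ℝ} (hε0 : 0 < ε0)
    (hball : ∀ w, dist w p ≤ ε0 → w ∈ Cset f p) :
    ∃ r > 0, ∀ x ∈ Cset f p, ∀ y : X, dist x y ≤ r → y ∈ Cset f p := by
  obtain ⟨r1, hr1, h1⟩ := asymp_fwd f hL hε0 hball
  obtain ⟨r2, hr2, h2⟩ := asymp_bwd f hL hε0 hball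
  refine ⟨min r1 r2, lt_min hr1 hr2, fun x hx y hxy => ?_⟩
  obtain ⟨z0, hz0, hfa⟩ := h1 x hx y (hxy.trans (min_le_left _ _))
  obtain ⟨z1, hz1, hba⟩ := h2 x hx y (hxy.trans (min_le_right _ _))
  obtain ⟨b, -, φ, hφ, hφt⟩ := IsCompact.tendsto_subseq (x := fun t : ℕ => (⇑f)^[t] z0)
    isCompact_univ (fun t => mem_univ _)
  have hbC : b ∈ Cset f p := (Cset_closed f p).mem_of_tendsto hφt
    (Filter.Eventually.of_forall fun t => Cset_iter f hz0 (φ t))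
  have hyb : ChainReach (⇑f) y b := by
    refine bridge f (z := y) (fun γ hγ => ⟨0, by simpa using le_of_lt hγ⟩) ?_
    intro γ hγ
    have e1 : ∀ᶠ t : ℕ in atTop, dist ((⇑f)^[φ t] z0) b < γ/2 :=
      Metric.tendsto_nhds.mp hφt (γ/2) (by linarith)
    have hc := hfa.comp hφ.tendsto_atTop
    have e2 : ∀ᶠ t : ℕ in atTop, dist ((⇑f)^[φ t] y) ((⇑f)^[φ t] z0) < γ/2 := by
      have := Metric.tendsto_nhds.mp hc (γ/2) (by linarith)
      simpa [Real.dist_eq, abs_of_nonneg dist_nonneg] using this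
    have e3 : ∀ᶠ t : ℕ in atTop, 1 ≤ φ t := hφ.tendsto_atTop.eventually_ge_atTop 1
    obtain ⟨t, ht1, ht2, ht3⟩ := (e1.and (e2.and e3)).exists
    refine ⟨φ t, ht3, ?_⟩
    calc dist ((⇑f)^[φ t] y) b ≤ dist ((⇑f)^[φ t] y) ((⇑f)^[φ t] z0) + dist ((⇑f)^[φ t] z0) b :=
          dist_triangle _ _ _
      _ ≤ γ/2 + γ/2 := add_le_add (le_of_lt ht2) (le_of_lt ht1)
      _ = γ := by ring
  obtain ⟨a, -, ψ, hψ, hψt⟩ := IsCompact.tendsto_subseq (x := fun t : ℕ => (⇑f.symm)^[t] z1)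
    isCompact_univ (fun t => mem_univ _)
  have haC : a ∈ Cset f p := (Cset_closed f p).mem_of_tendsto hψt
    (Filter.Eventually.of_forall fun t => Cset_iter_symm f hz1 (ψ t))
  have hay : ChainReach (⇑f) a y := by
    refine bridge f (z := f.symm y) ?_
      (fun γ hγ => ⟨1, le_rfl, by simpa [f.apply_symm_apply] using le_of_lt hγ⟩)
    intro γ hγ
    have e1 : ∀ᶠ t : ℕ in atTop, dist ((⇑f.symm)^[ψ t] z1) a < γ/2 :=
      Metric.tendsto_nhds.mp hψt (γ/2) (by linarith)
    have hc := hba.comp hψ.tendsto_atTop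
    have e2 : ∀ᶠ t : ℕ in atTop, dist ((⇑f.symm)^[ψ t] y) ((⇑f.symm)^[ψ t] z1) < γ/2 := by
      have := Metric.tendsto_nhds.mp hc (γ/2) (by linarith)
      simpa [Real.dist_eq, abs_of_nonneg dist_nonneg] using this
    have e3 : ∀ᶠ t : ℕ in atTop, 1 ≤ ψ t := hψ.tendsto_atTop.eventually_ge_atTop 1
    obtain ⟨t, ht1, ht2, ht3⟩ := (e1.and (e2.and e3)).exists
    refine ⟨ψ t - 1, ?_⟩
    have hit : (⇑f.symm)^[ψ t - 1] (f.symm y) = (⇑f.symm)^[ψ t] y := by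
      rw [show ψ t = (ψ t - 1) + 1 by omega, Function.iterate_succ_apply]
      rw [show (ψ t - 1) + 1 - 1 = ψ t - 1 by omega]
    rw [hit]
    calc dist ((⇑f.symm)^[ψ t] y) a
        ≤ dist ((⇑f.symm)^[ψ t] y) ((⇑f.symm)^[ψ t] z1) + dist ((⇑f.symm)^[ψ t] z1) a :=
          dist_triangle _ _ _
      _ ≤ γ/2 + γ/2 := add_le_add (le_of_lt ht2) (le_of_lt ht1)
      _ = γ := by ring
  have hpy : ChainReach (⇑f) p y := haC.1.trans' hay
  have hyp : ChainReach (⇑f) y p := hyb.trans' hbC.2.1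
  exact ⟨hpy, hyp, hyp.trans' hpy⟩

lemma all_reach [ConnectedSpace X] (hL : LShadowsOn f Set.univ)
    (hint : (interior (ChainRec (⇑f))).Nonempty) :
    ∀ a b : X, ChainReach (⇑f) a b := by
  obtain ⟨p, hpint⟩ := hint
  have hpCR : p ∈ ChainRec (⇑f) := interior_subset hpint
  obtain ⟨s, hs, hball0⟩ := Metric.isOpen_iff.mp isOpen_interior p hpint
  obtain ⟨δ0, hδ0, hstar⟩ := star f hL
  set ε0 := min (s/2) δ0 with hε0def
  have hε0 : 0 < ε0 := lt_min (by linarith) hδ0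
  have hball : ∀ w, dist w p ≤ ε0 → w ∈ Cset f p := by
    intro w hw
    have hwCR : w ∈ ChainRec (⇑f) := by
      have : w ∈ Metric.ball p s := by
        rw [Metric.mem_ball]
        have := hw.trans (min_le_left _ _)
        linarith
      exact interior_subset (hball0 this)
    have hd : dist p w ≤ δ0 := by rw [dist_comm]; exact hw.trans (min_le_right _ _)
    have hd2 : dist w p ≤ δ0 := hw.trans (min_le_right _ _)
    exact ⟨hstar p w hpCR hwCR hd, hstar w p hwCR hpCR hd2, hwCR⟩
  obtain ⟨r, hr, hopen⟩ := Cset_uniform_open f hL hε0 hball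
  have hCopen : IsOpen (Cset f p) := by
    rw [Metric.isOpen_iff]
    intro x hx
    refine ⟨r, hr, fun y hy => ?_⟩
    rw [Metric.mem_ball] at hy
    exact hopen x hx y (by rw [dist_comm]; exact le_of_lt hy)
  have hCuniv : Cset f p = Set.univ := by
    refine IsClopen.eq_univ ⟨Cset_closed f p, hCopen⟩ ⟨p, ?_⟩
    exact ⟨hpCR, hpCR, hpCR⟩
  intro a b
  have ha : a ∈ Cset f p := by rw [hCuniv]; exact mem_univ _
  have hb : b ∈ Cset f p := by rw [hCuniv]; exact mem_univ _
  exact ha.2.1.trans' hb.1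

end OpenLem
section Shad
variable [MetricSpace X] [CompactSpace X] (f : X ≃ₜ X)

lemma shadows (hL : LShadowsOn f Set.univ) : ShadowsOn (⇑f) Set.univ := by
  intro ε hε
  obtain ⟨δ, hδ, hsh⟩ := hL ε hε
  refine ⟨δ, hδ, fun k c _ hc => ?_⟩
  set ξ : ℤ → X := fun i => if i < 0 then (⇑f.symm)^[(-i).toNat] (c 0)
    else if i ≤ (k:ℤ) then c i.toNat else (⇑f)^[(i - k).toNat] (c k) with hξdef
  have hA : ∀ i : ℤ, i ≤ 0 → ξ i = (⇑f.symm)^[(-i).toNat] (c 0) := by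
    intro i hi
    rcases lt_or_eq_of_le hi with h | h
    · simp only [hξdef, if_pos h]
    · subst h
      simp only [hξdef, lt_irrefl, if_neg (by omega : ¬ (0:ℤ) < 0)]
      rw [if_pos (by omega : (0:ℤ) ≤ (k:ℤ))]
      simp
  have hB : ∀ i : ℤ, 0 ≤ i → i ≤ (k:ℤ) → ξ i = c i.toNat := by
    intro i h1 h2
    simp only [hξdef, if_neg (by omega : ¬ i < 0), if_pos h2]
  have hCC : ∀ i : ℤ, (k:ℤ) ≤ i → ξ i = (⇑f)^[(i - k).toNat] (c k) := by
    intro i h1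
    rcases lt_or_eq_of_le h1 with h | h
    · simp only [hξdef, if_neg (by omega : ¬ i < 0), if_neg (by omega : ¬ i ≤ (k:ℤ))]
    · subst h
      simp only [hξdef, if_neg (by omega : ¬ (k:ℤ) < 0), if_pos (le_refl _)]
      rw [show ((k:ℤ) - (k:ℤ)).toNat = 0 by omega]
      simp
  have hzneg : ∀ i : ℤ, i ≤ -1 → dist (f (ξ i)) (ξ (i+1)) = 0 := by
    intro i hi
    rw [hA i (by omega), hA (i+1) (by omega)]
    rw [show (-i).toNat = (-(i+1)).toNat + 1 by omega, Function.iterate_succ_apply',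
      f.apply_symm_apply, dist_self]
  have hzpos : ∀ i : ℤ, (k:ℤ) ≤ i → dist (f (ξ i)) (ξ (i+1)) = 0 := by
    intro i hi
    rw [hCC i hi, hCC (i+1) (by omega)]
    rw [show ((i+1) - (k:ℤ)).toNat = (i - (k:ℤ)).toNat + 1 by omega,
      Function.iterate_succ_apply', dist_self]
  have herr : ∀ i : ℤ, dist (f (ξ i)) (ξ (i+1)) ≤ δ := by
    intro i
    rcases lt_or_ge i 0 with hi | hi
    · rw [hzneg i (by omega)]; linarith
    rcases lt_or_ge i (k:ℤ) with h2 | h2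
    · rw [hB i hi (by omega), hB (i+1) (by omega) (by omega),
        show (i+1).toNat = i.toNat + 1 by omega]
      exact hc i.toNat (by omega)
    · rw [hzpos i h2]; linarith
  have hlpo : IsLimitPseudoOrbit f δ ξ := by
    refine ⟨herr, ?_, ?_⟩
    · have hev : (fun i : ℤ => dist (f (ξ i)) (ξ (i+1))) =ᶠ[atBot] (fun _ => (0:ℝ)) :=
        eventually_atBot.mpr ⟨-1, fun i hi => hzneg i hi⟩
      exact Filter.Tendsto.congr' hev.symm tendsto_const_nhds
    · have hev : (fun i : ℤ => dist (f (ξ i)) (ξ (i+1))) =ᶠ[atTop] (fun _ => (0:ℝ)) :=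
        eventually_atTop.mpr ⟨(k:ℤ), fun i hi => hzpos i hi⟩
      exact Filter.Tendsto.congr' hev.symm tendsto_const_nhds
  obtain ⟨z, hzb, -, -⟩ := hsh ξ (fun _ => mem_univ _) hlpo
  refine ⟨z, fun i hi => ?_⟩
  have := hzb (i : ℤ)
  rw [hB (i:ℤ) (by omega) (by omega), hIter_natCast] at this
  simpa using this

end Shad
section Arith

lemma semigroup_cofinite {G : Set ℕ} (h1 : ∀ g ∈ G, 1 ≤ g)
    (hadd : ∀ a ∈ G, ∀ b ∈ G, a + b ∈ G)
    (hone : (1 : ℤ) ∈ AddSubgroup.closure ((fun n : ℕ => (n:ℤ)) '' G)) :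
    ∃ N, ∀ n ≥ N, n ∈ G := by
  -- multiples
  have hmul : ∀ g ∈ G, ∀ m : ℕ, 1 ≤ m → m * g ∈ G := by
    intro g hg m hm
    induction m with
    | zero => omega
    | succ m ih =>
        rcases Nat.eq_zero_or_pos m with rfl | hm'
        · simpa using hg
        · have := hadd _ (ih hm') _ hg
          rwa [show m * g + g = (m+1) * g by ring] at this
  -- characterize the subgroup
  set H : AddSubgroup ℤ :=
    { carrier := {z | ∃ a b : ℕ, (a ∈ G ∨ a = 0) ∧ (b ∈ G ∨ b = 0) ∧ z = (a:ℤ) - b}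
      zero_mem' := ⟨0, 0, Or.inr rfl, Or.inr rfl, by simp⟩
      add_mem' := by
        rintro x y ⟨a, b, ha, hb, rfl⟩ ⟨a', b', ha', hb', rfl⟩
        refine ⟨a + a', b + b', ?_, ?_, by push_cast; ring⟩
        · rcases ha with ha | rfl
          · rcases ha' with ha' | rfl
            · exact Or.inl (hadd _ ha _ ha')
            · simpa using Or.inl ha
          · simpa using ha'
        · rcases hb with hb | rfl
          · rcases hb' with hb' | rfl
            · exact Or.inl (hadd _ hb _ hb')
            · simpa using Or.inl hb
          · simpa using hb'
      neg_mem' := by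
        rintro x ⟨a, b, ha, hb, rfl⟩
        exact ⟨b, a, hb, ha, by ring⟩ } with hHdef
  have hsub : AddSubgroup.closure ((fun n : ℕ => (n:ℤ)) '' G) ≤ H := by
    rw [AddSubgroup.closure_le]
    rintro z ⟨g, hg, rfl⟩
    exact ⟨g, 0, Or.inl hg, Or.inr rfl, by simp⟩
  obtain ⟨a, b, ha, hb, hab⟩ := hsub hone
  rcases hb with hb | rfl
  · -- a = b + 1, both in G
    have haG : a ∈ G := by
      rcases ha with ha | rfl
      · exact ha
      · exfalso
        have := h1 b hb
        omega
    have hab' : a = b + 1 := by omega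
    have hb1 : 1 ≤ b := h1 b hb
    refine ⟨b * b, fun n hn => ?_⟩
    set q := n / b with hq
    set s := n % b with hs
    have hdm : b * q + s = n := Nat.div_add_mod n b
    have hsb : s < b := Nat.mod_lt _ (by omega)
    have hbq : b ≤ q := by
      rw [hq, Nat.le_div_iff_mul_le (by omega)]
      exact hn
    have hsq : s < q := by omega
    have hrep : (q - s) * b + s * a = n := by
      have e1 : (q - s) * b = q * b - s * b := Nat.sub_mul _ _ _
      have e2 : s * a = s * b + s := by rw [hab']; ring
      have e3 : s * b ≤ q * b := Nat.mul_le_mul_right _ (by omega)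
      have e4 : b * q = q * b := Nat.mul_comm _ _
      omega
    have hqs : (q - s) * b ∈ G := hmul b hb _ (by omega)
    rcases Nat.eq_zero_or_pos s with hs0 | hs1
    · rw [← hrep, hs0]
      simpa using hmul b hb q (by omega)
    · rw [← hrep]
      exact hadd _ hqs _ (hmul a haG s hs1)
  · -- b = 0 : a = 1 ∈ G
    have haG : a ∈ G := by
      rcases ha with ha | rfl
      · exact ha
      · omega
    have ha1 : a = 1 := by omega
    refine ⟨1, fun n hn => ?_⟩
    have := hmul a haG n hn
    rwa [ha1, Nat.mul_one] at this

end Arith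
section Partition
variable [MetricSpace X] [CompactSpace X] [ConnectedSpace X] (f : X ≃ₜ X)

lemma cycles_cofinite (hreach : ∀ a b : X, ChainReach (⇑f) a b) (p : X) {δ : ℝ} (hδ : 0 < δ) :
    ∃ N, ∀ n ≥ N, n ∈ {n : ℕ | 1 ≤ n ∧ ∃ c : ℕ → X, c 0 = p ∧ c n = p ∧
      IsDeltaChain (⇑f) (δ/2) n c} := by
  set G : Set ℕ := {n : ℕ | 1 ≤ n ∧ ∃ c : ℕ → X, c 0 = p ∧ c n = p ∧
    IsDeltaChain (⇑f) (δ/2) n c} with hGdef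
  have hadd : ∀ a ∈ G, ∀ b ∈ G, a + b ∈ G := by
    rintro a ⟨ha1, c, hc0, hca, hcc⟩ b ⟨hb1, e, he0, heb, hec⟩
    exact ⟨by omega, catc a c e, by rw [catc_zero, hc0], by rw [catc_last hb1, heb],
      catc_chain hcc hec (by rw [hca, he0])⟩
  refine semigroup_cofinite (fun g hg => hg.1) hadd ?_
  set H := AddSubgroup.closure ((fun n : ℕ => (n:ℤ)) '' G) with hHdef
  have hGH : ∀ n ∈ G, (n:ℤ) ∈ H := fun n hn => AddSubgroup.subset_closure ⟨n, hn, rfl⟩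
  set W : ℤ → Set X := fun r => {y | ∃ n : ℕ, 1 ≤ n ∧ ((n:ℤ) - r) ∈ H ∧ ∃ c : ℕ → X,
    c 0 = p ∧ IsDeltaChain (⇑f) (δ/4) n c ∧ dist (c n) y < δ/4} with hWdef
  have hWopen : ∀ r, IsOpen (W r) := by
    intro r
    rw [Metric.isOpen_iff]
    rintro y ⟨n, hn, hH1, c, hc0, hcc, hd⟩
    refine ⟨δ/4 - dist (c n) y, by linarith, fun y' hy' => ?_⟩
    rw [Metric.mem_ball] at hy'
    refine ⟨n, hn, hH1, c, hc0, hcc, ?_⟩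
    calc dist (c n) y' ≤ dist (c n) y + dist y y' := dist_triangle _ _ _
      _ < dist (c n) y + (δ/4 - dist (c n) y) := by
          rw [dist_comm y y']
          linarith
      _ = δ/4 := by ring
  have hWshift : ∀ r s : ℤ, r - s ∈ H → W r ⊆ W s := by
    rintro r s hrs y ⟨n, hn, hH1, c, hc0, hcc, hd⟩
    refine ⟨n, hn, ?_, c, hc0, hcc, hd⟩
    have : (n:ℤ) - s = ((n:ℤ) - r) + (r - s) := by ring
    rw [this]
    exact add_mem hH1 hrs
  have hcover : ∀ y : X, ∃ n : ℕ, 1 ≤ n ∧ y ∈ W (n:ℤ) := by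
    intro y
    obtain ⟨n, hn, c, hc0, hcn, hcc⟩ := hreach p y (δ/4) (by linarith)
    exact ⟨n, hn, n, hn, by simpa using AddSubgroup.zero_mem H, c, hc0, hcc,
      by rw [hcn, dist_self]; linarith⟩
  have hdisj : ∀ r s : ℤ, ∀ y : X, y ∈ W r → y ∈ W s → r - s ∈ H := by
    rintro r s y ⟨n, hn, hH1, c, hc0, hcc, hd⟩ ⟨m, hm, hH2, e, he0, hec, hd2⟩
    obtain ⟨l, hl, g, hg0, hgl, hgc⟩ := hreach y p (δ/4) (by linarith)
    have hcycle : ∀ (n' : ℕ) (c' : ℕ → X), 1 ≤ n' → c' 0 = p →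
        IsDeltaChain (⇑f) (δ/4) n' c' → dist (c' n') y < δ/4 → (n' + l) ∈ G := by
      intro n' c' hn' hc0' hcc' hd'
      set cy : ℕ → X := fun j => if j = n' then y else c' j with hcy
      have hcyc : IsDeltaChain (⇑f) (δ/2) n' cy := by
        intro i hi
        have hv1 : cy i = c' i := by simp only [hcy, if_neg (by omega : i ≠ n')]
        rw [hv1]
        rcases eq_or_ne (i+1) n' with he' | he'
        · have hv2 : cy (i+1) = y := by simp only [hcy, if_pos he']
          rw [hv2]
          calc dist (f (c' i)) y ≤ dist (f (c' i)) (c' (i+1)) + dist (c' (i+1)) y :=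
                dist_triangle _ _ _
            _ ≤ δ/4 + δ/4 := add_le_add (hcc' i hi) (by rw [he']; exact le_of_lt hd')
            _ = δ/2 := by ring
        · have hv2 : cy (i+1) = c' (i+1) := by simp only [hcy, if_neg he']
          rw [hv2]
          exact (hcc' i hi).trans (by linarith)
      refine ⟨by omega, catc n' cy g, ?_, ?_, ?_⟩
      · rw [catc_zero]
        simp only [hcy, if_neg (by omega : (0:ℕ) ≠ n')]
        exact hc0'
      · rw [catc_last hl, hgl]
      · refine catc_chain hcyc (fun i hi => (hgc i hi).trans (by linarith)) ?_
        simp only [hcy, if_pos rfl]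
        rw [hg0]
    have hG1 : (n + l) ∈ G := hcycle n c hn hc0 hcc hd
    have hG2 : (m + l) ∈ G := hcycle m e hm he0 hec hd2
    have key : r - s = (((n+l:ℕ):ℤ) - ((m+l:ℕ):ℤ) - ((n:ℤ) - r)) + ((m:ℤ) - s) := by
      push_cast
      ring
    rw [key]
    exact add_mem (sub_mem (sub_mem (hGH _ hG1) (hGH _ hG2)) hH1) hH2
  by_contra hone
  have hp0 : p ∈ W 0 := by
    obtain ⟨n, hn, c, hc0, hcn, hcc⟩ := hreach p p (δ/4) (by linarith)
    have hnG : n ∈ G := ⟨hn, c, hc0, hcn, fun i hi => (hcc i hi).trans (by linarith)⟩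
    exact ⟨n, hn, by simpa using hGH n hnG, c, hc0, hcc, by rw [hcn, dist_self]; linarith⟩
  have hfp : f p ∈ W 1 := by
    refine ⟨1, le_rfl, by simpa using AddSubgroup.zero_mem H,
      fun j => if j = 0 then p else f p, by simp, ?_, ?_⟩
    · intro i hi
      interval_cases i
      show dist (f (if (0:ℕ) = 0 then p else f p)) (if (1:ℕ) = 0 then p else f p) ≤ δ/4
      rw [if_pos rfl, if_neg (by omega : (1:ℕ) ≠ 0), dist_self]
      linarith
    · simp only [if_neg (by omega : (1:ℕ) ≠ 0)]
      rw [dist_self]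
      linarith
  set V : Set X := ⋃ r ∈ {r : ℤ | r ∉ H}, W r with hVdef
  have hVopen : IsOpen V := isOpen_biUnion (fun r _ => hWopen r)
  have hUV : (Set.univ : Set X) ⊆ W 0 ∪ V := by
    intro y _
    obtain ⟨n, hn, hy⟩ := hcover y
    by_cases hnH : ((n:ℤ)) ∈ H
    · left
      exact hWshift (n:ℤ) 0 (by simpa using hnH) hy
    · right
      exact Set.mem_biUnion hnH hy
  have := isPreconnected_univ (u := W 0) (v := V) (hWopen 0) hVopen hUV
    ⟨p, mem_univ _, hp0⟩ ⟨f p, mem_univ _, Set.mem_biUnion hone hfp⟩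
  obtain ⟨y, -, hyU, hyV⟩ := this
  obtain ⟨r, hrH, hyr⟩ := Set.mem_iUnion₂.mp hyV
  have h0r : (0:ℤ) - r ∈ H := hdisj 0 r y hyU hyr
  have : r ∈ H := by
    have := neg_mem h0r
    simpa using this
  exact hrH this

end Partition
lemma deltaChain_mono [MetricSpace X] {f : X → X} {δ δ' : ℝ} (h : δ ≤ δ') {k : ℕ} {c : ℕ → X}
    (hc : IsDeltaChain f δ k c) : IsDeltaChain f δ' k c :=
  fun i hi => (hc i hi).trans h

theorem stmt11 [MetricSpace X] [CompactSpace X] [ConnectedSpace X] (f : X ≃ₜ X)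
    (hL : LShadowsOn f Set.univ)
    (hint : (interior (ChainRec (⇑f))).Nonempty) :
    IsMixing (⇑f) := by
  have hreach : ∀ a b : X, ChainReach (⇑f) a b := all_reach f hL hint
  intro U V hUo hVo hUne hVne
  obtain ⟨u, hu⟩ := hUne
  obtain ⟨v, hv⟩ := hVne
  obtain ⟨εu, hεu, hbu⟩ := Metric.isOpen_iff.mp hUo u hu
  obtain ⟨εv, hεv, hbv⟩ := Metric.isOpen_iff.mp hVo v hv
  set ε := min εu εv / 2 with hεdef
  have hε : 0 < ε := by
    have := lt_min hεu hεv
    simp only [hεdef]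
    linarith
  obtain ⟨δ, hδ, hshad⟩ := shadows f hL ε hε
  obtain ⟨N, hN⟩ := cycles_cofinite f hreach u hδ
  obtain ⟨B, hB, c2, hc20, hc2B, hc2c⟩ := hreach u v (δ/2) (by linarith)
  refine ⟨N + B, fun i hi => ?_⟩
  obtain ⟨hn1, c1, hc10, hc1n, hc1c⟩ := hN (i - B) (by omega)
  set c := catc (i - B) c1 c2 with hcdef
  have hcchain : IsDeltaChain (⇑f) δ i c := by
    have := catc_chain (deltaChain_mono (by linarith : δ/2 ≤ δ) hc1c)
      (deltaChain_mono (by linarith : δ/2 ≤ δ) hc2c) (by rw [hc1n, hc20])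
    rwa [show (i - B) + B = i by omega] at this
  have hc0 : c 0 = u := by rw [hcdef, catc_zero, hc10]
  have hci : c i = v := by
    have : c ((i - B) + B) = c2 B := catc_last hB _ _
    rw [show (i - B) + B = i by omega] at this
    rw [this, hc2B]
  obtain ⟨x, hx⟩ := hshad i c (fun _ _ => mem_univ _) hcchain
  have hx0 := hx 0 (by omega)
  rw [hc0, Function.iterate_zero_apply] at hx0
  have hxi := hx i le_rfl
  rw [hci] at hxi
  have hxU : x ∈ U := by
    refine hbu ?_
    rw [Metric.mem_ball, dist_comm]
    have h1 : ε < εu := by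
      have := min_le_left εu εv
      simp only [hεdef]
      linarith
    linarith
  have hfiV : (⇑f)^[i] x ∈ V := by
    refine hbv ?_
    rw [Metric.mem_ball, dist_comm]
    have h1 : ε < εv := by
      have := min_le_right εu εv
      simp only [hεdef]
      linarith
    linarith
  exact ⟨(⇑f)^[i] x, ⟨x, hxU, rfl⟩, hfiV⟩
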